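/- Let β ∈ ℝ, Z > 0, and let v : [Z,∞) → ℝ be continuously differentiable with z^{β+1/3} v(z)² → 0 as z → ∞, ∫_Z^∞ v(z)² z^{β−2/3} dz < ∞, and ∫_Z^∞ (z^{2/3}v'(z))² z^β dz < ∞. Then ∫_Z^∞ (z^{2/3}v'(z))² z^β dz + (2/3)(1/3 − β) ∫_Z^∞ v(z)² z^{β−2/3} dz = (2/3) Z^{β+1/3} v(Z)² + ∫_Z^∞ ((z^{2/3}v(z))')² z^β dz. -/

import Mathlib

open MeasureTheory Set Filter

/-- Hardy identity at infinity for the weighted gradient `∂̂v = z^{2/3}v'` and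
weighted divergence `D̂v = (z^{2/3}v)'`. -/
theorem hardy_identity_infinity
    (β Z : ℝ) (hZ : 0 < Z) (v : ℝ → ℝ)
    (hv_C1 : ContDiffOn ℝ 1 v (Set.Ici Z))
    (hlim : Filter.Tendsto (fun z => z ^ (β + 1/3) * (v z) ^ 2) Filter.atTop (nhds 0))
    (hI1 : IntegrableOn (fun z => (v z) ^ 2 * z ^ (β - 2/3)) (Set.Ioi Z))
    (hI2 : IntegrableOn (fun z => (z ^ ((2:ℝ)/3) * deriv v z) ^ 2 * z ^ β) (Set.Ioi Z)) :
    (∫ z in Set.Ioi Z, (z ^ ((2:ℝ)/3) * deriv v z) ^ 2 * z ^ β)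
      + (2/3) * (1/3 - β) * ∫ z in Set.Ioi Z, (v z) ^ 2 * z ^ (β - 2/3)
      = (2/3) * Z ^ (β + 1/3) * (v Z) ^ 2
        + ∫ z in Set.Ioi Z, (deriv (fun x => x ^ ((2:ℝ)/3) * v x) z) ^ 2 * z ^ β := by
  have hv_cont : ContinuousOn v (Set.Ici Z) := hv_C1.continuousOn
  have hv_diff : ∀ z ∈ Set.Ioi Z, HasDerivAt v (deriv v z) z := by
    intro z hz
    have h1 : DifferentiableWithinAt ℝ v (Set.Ici Z) z :=
      (hv_C1.differentiableOn one_ne_zero) z (show Z ≤ z from le_of_lt hz)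
    exact (h1.differentiableAt (Ici_mem_nhds hz)).hasDerivAt
  have hpos : ∀ z ∈ Set.Ioi Z, (0:ℝ) < z := fun z hz => hZ.trans hz
  have hrpow : ∀ c : ℝ, ContinuousOn (fun z : ℝ => z ^ c) (Set.Ioi Z) :=
    fun c => ContinuousOn.rpow_const continuousOn_id
      (fun x hx => Or.inl (ne_of_gt (hpos x hx)))
  have hrpow_meas : ∀ c : ℝ, AEStronglyMeasurable (fun z : ℝ => z ^ c)
      (volume.restrict (Set.Ioi Z)) :=
    fun c => (hrpow c).aestronglyMeasurable measurableSet_Ioi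
  have hv_meas : AEStronglyMeasurable v (volume.restrict (Set.Ioi Z)) :=
    (hv_cont.mono Set.Ioi_subset_Ici_self).aestronglyMeasurable measurableSet_Ioi
  -- integrability of g z = z^(β+1/3) * v z * deriv v z
  set g : ℝ → ℝ := fun z => z ^ (β + 1/3) * v z * deriv v z with hg_def
  have hg_meas : AEStronglyMeasurable g (volume.restrict (Set.Ioi Z)) :=
    ((hrpow_meas _).mul hv_meas).mul (measurable_deriv v).aestronglyMeasurable
  have hbound_int : Integrable
      (fun z => (1/2) * ((v z) ^ 2 * z ^ (β - 2/3) + (z ^ ((2:ℝ)/3) * deriv v z) ^ 2 * z ^ β))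
      (volume.restrict (Set.Ioi Z)) := ((hI1.add hI2).const_mul _)
  have hg_int : IntegrableOn g (Set.Ioi Z) := by
    apply Integrable.mono' hbound_int hg_meas
    filter_upwards [ae_restrict_mem measurableSet_Ioi] with z hz
    have hz0 : (0:ℝ) < z := hpos z hz
    set a : ℝ := v z * z ^ ((β - 2/3)/2)
    set b : ℝ := z ^ ((2:ℝ)/3) * deriv v z * z ^ (β/2)
    have hab : g z = a * b := by
      simp only [hg_def, a, b]
      rw [show β + 1/3 = (β - 2/3)/2 + (2/3 + β/2) by ring, Real.rpow_add hz0,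
        Real.rpow_add hz0]
      ring
    have ha2 : a ^ 2 = (v z) ^ 2 * z ^ (β - 2/3) := by
      simp only [a, mul_pow, ← Real.rpow_natCast (z ^ ((β - 2/3)/2)) 2,
        ← Real.rpow_mul hz0.le]
      norm_num
    have hb2 : b ^ 2 = (z ^ ((2:ℝ)/3) * deriv v z) ^ 2 * z ^ β := by
      simp only [b, mul_pow, ← Real.rpow_natCast (z ^ (β/2)) 2, ← Real.rpow_mul hz0.le]
      norm_num
    have key : |a| * |b| ≤ (a^2 + b^2)/2 := by
      nlinarith [sq_abs a, sq_abs b, sq_nonneg (abs a - abs b)]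
    rw [ha2, hb2] at key
    rw [Real.norm_eq_abs, hab, abs_mul]
    linarith
  -- FTC at infinity for F z = z^(β+1/3) * v z ^ 2
  set F : ℝ → ℝ := fun z => z ^ (β + 1/3) * (v z) ^ 2 with hF_def
  set F' : ℝ → ℝ := fun z =>
    (β + 1/3) * ((v z) ^ 2 * z ^ (β - 2/3)) + 2 * g z with hF'_def
  have hF'_int : IntegrableOn F' (Set.Ioi Z) := (hI1.const_mul _).add (hg_int.const_mul 2)
  have hF_deriv : ∀ z ∈ Set.Ioi Z, HasDerivAt F (F' z) z := by
    intro z hz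
    have hz0 : (0:ℝ) < z := hpos z hz
    have h1 : HasDerivAt (fun x : ℝ => x ^ (β + 1/3))
        ((β + 1/3) * z ^ (β + 1/3 - 1)) z := Real.hasDerivAt_rpow_const (Or.inl hz0.ne')
    have h2 : HasDerivAt (fun x => (v x) ^ 2) (2 * v z * deriv v z) z := by
      have := (hv_diff z hz).fun_pow 2
      simpa using this
    have h3 : HasDerivAt (fun x => x ^ (β + 1/3) * (v x) ^ 2) _ z := h1.fun_mul h2
    convert h3 using 1
    simp only [hF'_def, hg_def]
    rw [show β + 1/3 - 1 = β - 2/3 by ring]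
    ring
  have hF_cont : ContinuousWithinAt F (Set.Ici Z) Z := by
    apply ContinuousWithinAt.mul
    · exact (Real.continuousAt_rpow_const Z _ (Or.inl hZ.ne')).continuousWithinAt
    · exact ((hv_cont Z Set.self_mem_Ici).pow 2)
  have hFTC : ∫ z in Set.Ioi Z, F' z = 0 - F Z :=
    integral_Ioi_of_hasDerivAt_of_tendsto hF_cont hF_deriv hF'_int hlim
  have hFTC' : (β + 1/3) * (∫ z in Set.Ioi Z, (v z) ^ 2 * z ^ (β - 2/3))
      + 2 * (∫ z in Set.Ioi Z, g z) = - F Z := by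
    rw [← integral_const_mul, ← integral_const_mul, ← integral_add (hI1.const_mul _)
      (hg_int.const_mul 2)]
    rw [← zero_sub (F Z), ← hFTC]
  -- expansion of the divergence square
  have hexp : ∫ z in Set.Ioi Z, (deriv (fun x => x ^ ((2:ℝ)/3) * v x) z) ^ 2 * z ^ β
      = (∫ z in Set.Ioi Z, (z ^ ((2:ℝ)/3) * deriv v z) ^ 2 * z ^ β)
        + ((4/3) * ∫ z in Set.Ioi Z, g z)
        + (4/9) * ∫ z in Set.Ioi Z, (v z) ^ 2 * z ^ (β - 2/3) := by
    have step : ∫ z in Set.Ioi Z, (deriv (fun x => x ^ ((2:ℝ)/3) * v x) z) ^ 2 * z ^ β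
        = ∫ z in Set.Ioi Z, ((z ^ ((2:ℝ)/3) * deriv v z) ^ 2 * z ^ β
            + (4/3) * g z + (4/9) * ((v z) ^ 2 * z ^ (β - 2/3))) := by
      apply setIntegral_congr_fun measurableSet_Ioi
      intro z hz
      have hz0 : (0:ℝ) < z := hpos z hz
      have hD : deriv (fun x => x ^ ((2:ℝ)/3) * v x) z
          = (2/3) * z ^ ((2:ℝ)/3 - 1) * v z + z ^ ((2:ℝ)/3) * deriv v z := by
        have h1 : HasDerivAt (fun x : ℝ => x ^ ((2:ℝ)/3))
            ((2/3) * z ^ ((2:ℝ)/3 - 1)) z := Real.hasDerivAt_rpow_const (Or.inl hz0.ne')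
        exact (h1.mul (hv_diff z hz)).deriv
      simp only [hD, hg_def]
      have e1 : z ^ ((2:ℝ)/3 - 1) * z ^ ((2:ℝ)/3 - 1) * z ^ β = z ^ (β - 2/3) := by
        rw [← Real.rpow_add hz0, ← Real.rpow_add hz0]
        congr 1; ring
      have e2 : z ^ ((2:ℝ)/3 - 1) * z ^ ((2:ℝ)/3) * z ^ β = z ^ (β + 1/3) := by
        rw [← Real.rpow_add hz0, ← Real.rpow_add hz0]
        congr 1; ring
      linear_combination (4/9 * (v z)^2) * e1 + (4/3 * v z * deriv v z) * e2
    have hC : IntegrableOn (fun z => (4/3 : ℝ) * g z) (Set.Ioi Z) := hg_int.const_mul _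
    have hA : IntegrableOn
        (fun z => (z ^ ((2:ℝ)/3) * deriv v z) ^ 2 * z ^ β + (4/3) * g z) (Set.Ioi Z) :=
      hI2.add hC
    have hB : IntegrableOn (fun z => (4/9 : ℝ) * ((v z) ^ 2 * z ^ (β - 2/3))) (Set.Ioi Z) :=
      hI1.const_mul _
    rw [step, integral_add hA hB, integral_add hI2 hC, integral_const_mul, integral_const_mul]
  -- conclude
  have hFZ : F Z = Z ^ (β + 1/3) * (v Z) ^ 2 := rfl
  rw [hexp]
  rw [hFZ] at hFTC'
  linear_combination (-2/3 : ℝ) * hFTC'
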